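/- Let n ≥ 2 and Ω ⊆ ℝⁿ be a globally n-regular domain with constant θ ∈ (0,1), and set κ = (2ω_n/θ)^{1/n} + 2 where ω_n = |B(0,1)|. Then for every z ∈ Ω and 0 < s < (2/κ) diam Ω, the set Ω ∩ (B(z, κs) \ B(z, s)) is nonempty. -/

import Mathlib

open MeasureTheory Set Filter
open scoped ENNReal NNReal Topology

noncomputable def Lunder (n : ℕ) (α : ℝ) (φ : ℝ → ℝ) : ℝ≥0∞ :=
  ⨆ x ∈ Set.Ioi (0:ℝ), ∫⁻ t in Set.Ioo (0:ℝ) 1,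
    ENNReal.ofReal (φ (t ^ (1 - α) * x) / (φ x * t ^ (n + 1)))

noncomputable def Lover (n : ℕ) (α : ℝ) (φ : ℝ → ℝ) : ℝ≥0∞ :=
  ⨆ x ∈ Set.Ioi (0:ℝ), ∫⁻ t in Set.Ioi (1:ℝ),
    ENNReal.ofReal (φ (t ^ (-α) * x) / (φ x * t ^ (n + 1)))

noncomputable def besovSet (n : ℕ) (α : ℝ) (φ : ℝ → ℝ)
    (Ω : Set (EuclideanSpace ℝ (Fin n))) (u : EuclideanSpace ℝ (Fin n) → ℝ) : Set ℝ :=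
  {l : ℝ | 0 < l ∧
    (∫⁻ x in Ω, ∫⁻ y in Ω,
      ENNReal.ofReal (φ (|u x - u y| / (l * ‖x - y‖ ^ α)) / ‖x - y‖ ^ (2 * n))) ≤ 1}

theorem stmt12 (n : ℕ) (hn : 2 ≤ n)
    (Ω : Set (EuclideanSpace ℝ (Fin n))) (hopen : IsOpen Ω) (hconn : IsConnected Ω)
    (θ : ℝ) (hθ : θ ∈ Set.Ioo (0:ℝ) 1)
    (hreg : ∀ x ∈ Ω, ∀ r : ℝ, 0 < r → ENNReal.ofReal r < 2 * EMetric.diam Ω →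
      ENNReal.ofReal (θ * r ^ n) ≤ volume (Metric.ball x r ∩ Ω))
    (κ : ℝ)
    (hκ : κ = (2 * (volume (Metric.ball (0 : EuclideanSpace ℝ (Fin n)) 1)).toReal / θ)
      ^ ((1 : ℝ) / n) + 2)
    (z : EuclideanSpace ℝ (Fin n)) (hz : z ∈ Ω) (s : ℝ) (hs : 0 < s)
    (hs2 : ENNReal.ofReal (κ * s / 2) < EMetric.diam Ω) :
    (Ω ∩ (Metric.ball z (κ * s) \ Metric.ball z s)).Nonempty := by
  obtain ⟨hθ0, hθ1⟩ := hθ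
  haveI : NeZero n := ⟨by omega⟩
  set ω : ℝ := (volume (Metric.ball (0 : EuclideanSpace ℝ (Fin n)) 1)).toReal with hωdef
  have hωpos : 0 < ω :=
    ENNReal.toReal_pos (Metric.measure_ball_pos volume _ one_pos).ne' measure_ball_lt_top.ne
  have hc0 : (0:ℝ) < 2 * ω / θ := by positivity
  have hcpos : (0:ℝ) < (2 * ω / θ) ^ ((1:ℝ)/n) := Real.rpow_pos_of_pos hc0 _
  have hκ2 : (2:ℝ) < κ := by rw [hκ]; linarith
  have hκ0 : (0:ℝ) < κ := by linarith
  by_contra hempty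
  rw [Set.not_nonempty_iff_eq_empty] at hempty
  have hsub : Ω ∩ Metric.ball z (κ * s) ⊆ Metric.ball z s := by
    intro x hx
    by_contra hxb
    exact absurd hempty (Set.nonempty_iff_ne_empty.mp ⟨x, hx.1, hx.2, hxb⟩)
  have hκs : 0 < κ * s := by positivity
  have hdiam : ENNReal.ofReal (κ * s) < 2 * EMetric.diam Ω := by
    have : ENNReal.ofReal (κ * s) = 2 * ENNReal.ofReal (κ * s / 2) := by
      rw [← ENNReal.ofReal_ofNat, ← ENNReal.ofReal_mul (by norm_num)]
      ring_nf
    rw [this]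
    exact ENNReal.mul_lt_mul_iff_right (by norm_num) (by norm_num) |>.mpr hs2
  have hlow := hreg z hz (κ * s) hκs hdiam
  have hvol : volume (Metric.ball z (κ * s) ∩ Ω) ≤ ENNReal.ofReal (s ^ n * ω) := by
    calc volume (Metric.ball z (κ * s) ∩ Ω) ≤ volume (Metric.ball z s) := by
          apply measure_mono
          intro x hx
          exact hsub ⟨hx.2, hx.1⟩
      _ = ENNReal.ofReal (s ^ n * ω) := by
          rw [Measure.addHaar_ball volume z hs.le, finrank_euclideanSpace_fin,
            ENNReal.ofReal_mul (by positivity), hωdef,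
            ENNReal.ofReal_toReal measure_ball_lt_top.ne]
  have hreal : θ * (κ * s) ^ n ≤ s ^ n * ω := by
    have := hlow.trans hvol
    rwa [ENNReal.ofReal_le_ofReal_iff (by positivity)] at this
  have hsn : (0:ℝ) < s ^ n := by positivity
  have h1 : θ * κ ^ n ≤ ω := by
    have h2 : θ * κ ^ n * s ^ n ≤ ω * s ^ n := by
      calc θ * κ ^ n * s ^ n = θ * (κ * s) ^ n := by ring
        _ ≤ s ^ n * ω := hreal
        _ = ω * s ^ n := by ring
    exact le_of_mul_le_mul_right h2 hsn
  have hκn : 2 * ω / θ < κ ^ n := by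
    have hlt : (2 * ω / θ) ^ ((1:ℝ)/n) < κ := by rw [hκ]; linarith
    have := pow_lt_pow_left₀ hlt hcpos.le (by omega : n ≠ 0)
    calc 2 * ω / θ = ((2 * ω / θ) ^ ((1:ℝ)/n)) ^ n := by
          rw [← Real.rpow_natCast ((2 * ω / θ) ^ ((1:ℝ)/n)) n, ← Real.rpow_mul hc0.le,
            one_div, inv_mul_cancel₀ (by positivity : (n:ℝ) ≠ 0), Real.rpow_one]
      _ < κ ^ n := this
  have : 2 * ω < θ * κ ^ n := by
    have := (div_lt_iff₀ hθ0).mp hκn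
    linarith
  linarith
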